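/- Antiperiodicity and equioscillation of the standard function: Let β ≥ 0, let G be a real, continuous, 2π-periodic function, and let n ∈ ℕ. Then Φ_{n,β}^{G,φ} is continuous, satisfies Φ_{n,β}^{G,φ}(x + π/n) = −Φ_{n,β}^{G,φ}(x) for all x ∈ ℝ (hence is 2π/n-periodic), and there exist at least 2n points 0 ≤ t_1 < ⋯ < t_{2n} < 2π such that Φ_{n,β}^{G,φ}(t_j) = ε(−1)^j‖Φ_{n,β}^{G,φ}‖_∞ for j = 1,…,2n, where ε = 1 or ε = −1. -/

import Mathlib

open MeasureTheory Real Set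

noncomputable section

/-- Convolution of two `2π`-periodic functions: `(f ∗ g)(x) = (1/2π) ∫_0^{2π} f(x−t) g(t) dt`. -/
def conv (f g : ℝ → ℝ) : ℝ → ℝ :=
  fun x => (1 / (2 * π)) * ∫ t in (0:ℝ)..(2 * π), f (x - t) * g t

/-- Uniform (sup) norm of a function on `ℝ`. -/
def supNorm (f : ℝ → ℝ) : ℝ := ⨆ x : ℝ, |f x|

/-- `L_q` norm over a period `[0, 2π]`. -/
def LqNorm (q : ℝ) (f : ℝ → ℝ) : ℝ :=
  (∫ t in (0:ℝ)..(2 * π), |f t| ^ q) ^ (1 / q)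

/-- The kernel `K_β(z) = 1 + 2 ∑_{k≥1} cos(kz)/cosh(kβ)`. -/
def Kker (β : ℝ) : ℝ → ℝ :=
  fun z => 1 + 2 * ∑' k : ℕ, Real.cos (((k : ℝ) + 1) * z) / Real.cosh (((k : ℝ) + 1) * β)

/-- The `2π`-periodic step function `h_n`, equal to `(−1)^j` on `[(j−1)π/n, jπ/n)`. -/
def hstep (n : ℕ) : ℝ → ℝ :=
  fun x => (-1 : ℝ) ^ (⌊x * n / π⌋ + 1)

/-- `φ(K_β ∗ u)`, interpreted as `u` itself when `β = 0`. -/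
def phiK (β : ℝ) (φ u : ℝ → ℝ) : ℝ → ℝ :=
  if β = 0 then u else fun x => φ (conv (Kker β) u x)

/-- The standard function `Φ_{n,β}^{G,φ} = G ∗ φ(K_β ∗ h_n)`. -/
def stdPhi (G φ : ℝ → ℝ) (β : ℝ) (n : ℕ) : ℝ → ℝ :=
  conv G (phiK β φ (hstep n))

/-- `φ` is differentiable, odd, strictly increasing, with `φ'` continuous on `[−1,1]`. -/
structure IsAdmissiblePhi (φ : ℝ → ℝ) : Prop where
  differentiable : Differentiable ℝ φ
  odd : ∀ x, φ (-x) = -φ x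
  strictMono : StrictMono φ
  derivCont : ContinuousOn (deriv φ) (Icc (-1) 1)

/-- Number of (non-cyclic) sign changes in a list, zero terms already removed. -/
def signChangesAux (l : List ℝ) : ℕ :=
  (l.zip l.tail).countP fun p => decide (p.1 * p.2 < 0)

/-- `S^-(x)`: sign changes in a finite sequence, with zero terms discarded. -/
def signChanges (l : List ℝ) : ℕ :=
  signChangesAux (l.filter fun x => decide (x ≠ 0))

/-- `S_c^-(x)`: cyclic sign changes, the maximum of `S^-` over all cyclic rotations. -/
def cyclicSignChanges (l : List ℝ) : ℕ :=
  ((List.range l.length).map fun i => signChanges (l.rotate i)).foldr max 0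

/-- Lists of points `x_1 < ⋯ < x_m < x_1 + 2π`. -/
def WindowList (l : List ℝ) : Prop :=
  l.Chain' (· < ·) ∧ ∀ x ∈ l, ∀ y ∈ l, x < y + 2 * π

/-- `S_c(f)`: the number of cyclic sign changes of `f` on a period. -/
def Sc (f : ℝ → ℝ) : ℕ∞ :=
  ⨆ l : {l : List ℝ // WindowList l}, (cyclicSignChanges (l.1.map f) : ℕ∞)

/-- `S^-(f)` on the period `[0, 2π)` (non-cyclic sign changes). -/
def SminusPeriod (f : ℝ → ℝ) : ℕ∞ :=
  ⨆ l : {l : List ℝ // l.Chain' (· < ·) ∧ ∀ x ∈ l, x ∈ Ico (0:ℝ) (2 * π)},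
    (signChanges (l.1.map f) : ℕ∞)

/-- `2π`-periodic and piecewise continuous. -/
def PiecewiseContinuousPeriodic (f : ℝ → ℝ) : Prop :=
  Function.Periodic f (2 * π) ∧
  ∃ s : Finset ℝ, ContinuousOn f (Ico (0:ℝ) (2 * π) \ (s : Set ℝ))

/-- The subspace `X_m = {b + ∑_j b_j G(·−t_j) : ∑_j b_j = 0}`. -/
def XmSet (G : ℝ → ℝ) (m : ℕ) (t : Fin m → ℝ) : Set (ℝ → ℝ) :=
  {f | ∃ (b : ℝ) (c : Fin m → ℝ), (∑ j, c j) = 0 ∧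
        f = fun x => b + ∑ j, c j * G (x - t j)}

/-- Property B of a real, `2π`-periodic continuous kernel `G`. -/
def PropertyB (G : ℝ → ℝ) : Prop :=
  Continuous G ∧ Function.Periodic G (2 * π) ∧
  ∀ (m : ℕ) (t : Fin m → ℝ), 0 < m → StrictMono t →
    (∀ j, t j ∈ Ico (0:ℝ) (2 * π)) →
    (Module.finrank ℝ (Submodule.span ℝ (XmSet G m t)) = m ∧
     (Odd m → ∀ f ∈ XmSet G m t, f ≠ 0 → SminusPeriod f ≤ (m - 1 : ℕ)))

/-- Non-degenerate cyclic variation diminishing kernel. -/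
def NCVD (k : ℝ → ℝ) : Prop :=
  Continuous k ∧ Function.Periodic k (2 * π) ∧
  (∀ h : ℝ → ℝ, PiecewiseContinuousPeriodic h → Sc (conv k h) ≤ Sc h) ∧
  ∀ (n : ℕ) (x : Fin n → ℝ), 0 < n → StrictMono x →
    (∀ j, x j ∈ Ico (0:ℝ) (2 * π)) →
    Module.finrank ℝ (Submodule.span ℝ
      (Set.range fun j : Fin n => (fun t => k (x j - t)))) = n

/-- The class `K̃^{G,φ}_{∞,β}`; `thetaR = true` encodes `Θ = ℝ` (Property B case),
`thetaR = false` encodes `Θ = ∅` (NCVD case). -/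
def KClass (G φ : ℝ → ℝ) (β : ℝ) (thetaR : Bool) : Set (ℝ → ℝ) :=
  {f | ∃ (a : ℝ) (u : ℝ → ℝ),
    (thetaR = false → a = 0) ∧
    (thetaR = true → (∫ t in (0:ℝ)..(2 * π), phiK β φ u t) = 0) ∧
    Function.Periodic u (2 * π) ∧ Measurable u ∧ (∀ x, |u x| ≤ 1) ∧
    f = fun x => a + conv G (phiK β φ u) x}

/-- Fourier cosine coefficient. -/
def fourierA (j : ℕ) (f : ℝ → ℝ) : ℝ :=
  (1 / π) * ∫ t in (0:ℝ)..(2 * π), f t * Real.cos (j * t)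

/-- Fourier sine coefficient. -/
def fourierB (j : ℕ) (f : ℝ → ℝ) : ℝ :=
  (1 / π) * ∫ t in (0:ℝ)..(2 * π), f t * Real.sin (j * t)

/-- The information `I_{2n−1}(f) = (a_0(f), a_1(f), b_1(f), …, a_{n−1}(f), b_{n−1}(f))`. -/
def Info (n : ℕ) (f : ℝ → ℝ) : Fin (2 * n - 1) → ℝ := fun i =>
  if i.val = 0 then fourierA 0 f
  else if i.val % 2 = 1 then fourierA ((i.val + 1) / 2) f
  else fourierB (i.val / 2) f

/-- Trigonometric polynomials of order `n−1`. -/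
def TrigPoly (n : ℕ) : Submodule ℝ (ℝ → ℝ) :=
  Submodule.span ℝ ((Set.range fun j : Fin n => (fun t : ℝ => Real.cos (j * t))) ∪
    (Set.range fun j : Fin n => (fun t : ℝ => Real.sin (j * t))))

/-- Kolmogorov `n`-width of `A` with respect to the norm functional `N`. -/
def kolWidth (n : ℕ) (A : Set (ℝ → ℝ)) (N : (ℝ → ℝ) → ℝ) : ℝ :=
  ⨅ X : {X : Submodule ℝ (ℝ → ℝ) // Module.finrank ℝ X = n},
    ⨆ f : A, ⨅ g : X.1, N ((f : ℝ → ℝ) - (g : ℝ → ℝ))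

/-- Linear `n`-width of `A` with respect to the norm functional `N`. -/
def linWidth (n : ℕ) (A : Set (ℝ → ℝ)) (N : (ℝ → ℝ) → ℝ) : ℝ :=
  ⨅ P : {P : (ℝ → ℝ) →ₗ[ℝ] (ℝ → ℝ) // Module.finrank ℝ (LinearMap.range P) ≤ n},
    ⨆ f : A, N ((f : ℝ → ℝ) - P.1 (f : ℝ → ℝ))

/-- Gel'fand `n`-width of `A` with respect to the norm functional `N`. -/
def gelWidth (n : ℕ) (A : Set (ℝ → ℝ)) (N : (ℝ → ℝ) → ℝ) : ℝ :=
  ⨅ X : {X : Submodule ℝ (ℝ → ℝ) // Module.finrank ℝ ((ℝ → ℝ) ⧸ X) = n},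
    ⨆ f : (A ∩ (X.1 : Set (ℝ → ℝ)) : Set (ℝ → ℝ)), N (f : ℝ → ℝ)

/-- Information `n`-width of `A` with respect to the norm functional `N`. -/
def infWidth (n : ℕ) (A : Set (ℝ → ℝ)) (N : (ℝ → ℝ) → ℝ) : ℝ :=
  ⨅ l : Fin n → ((ℝ → ℝ) →ₗ[ℝ] ℝ), ⨅ m : (Fin n → ℝ) → (ℝ → ℝ),
    ⨆ f : A, N ((f : ℝ → ℝ) - m (fun i => l i (f : ℝ → ℝ)))

/-- All eight widths `d_{2n}, λ_{2n}, d^{2n}, i_{2n}, d_{2n−1}, λ_{2n−1}, d^{2n−1}, i_{2n−1}`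
of `A` equal `v`. -/
def allWidthsEq (A : Set (ℝ → ℝ)) (n : ℕ) (N : (ℝ → ℝ) → ℝ) (v : ℝ) : Prop :=
  kolWidth (2 * n) A N = v ∧ linWidth (2 * n) A N = v ∧
  gelWidth (2 * n) A N = v ∧ infWidth (2 * n) A N = v ∧
  kolWidth (2 * n - 1) A N = v ∧ linWidth (2 * n - 1) A N = v ∧
  gelWidth (2 * n - 1) A N = v ∧ infWidth (2 * n - 1) A N = v

/-- The mean-zero periodic integral `G̃(x) = ∫_0^x (G(y) − a_0) dy`. -/
def Gtilde (G : ℝ → ℝ) : ℝ → ℝ :=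
  fun x => ∫ y in (0:ℝ)..x, (G y - (1 / (2 * π)) * ∫ z in (0:ℝ)..(2 * π), G z)

/-- `F` is a `2π`-periodic integral of `f`. -/
def IsPeriodicIntegral (F f : ℝ → ℝ) : Prop :=
  Function.Periodic F (2 * π) ∧ ∀ x, HasDerivAt F (f x) x

/-- Nonincreasing rearrangement `r(f, t)` of `|f|` on `[0, 2π]`. -/
def rearr (f : ℝ → ℝ) (t : ℝ) : ℝ :=
  sInf {lam : ℝ | 0 ≤ lam ∧
    (volume {x ∈ Icc (0:ℝ) (2 * π) | lam < |f x|}).toReal ≤ t}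

/-- `ψ` is a `2l`-regular function. -/
def RegularPeriodic (ψ : ℝ → ℝ) (l : ℝ) : Prop :=
  Continuous ψ ∧ Function.Periodic ψ (2 * l) ∧
  ∃ a c, a < c ∧ c < a + 2 * l ∧
    ((∀ x, ψ x ≤ ψ a) ∨ (∀ x, ψ a ≤ ψ x)) ∧
    (StrictMonoOn ψ (Ioo a c) ∨ StrictAntiOn ψ (Ioo a c)) ∧
    (StrictMonoOn ψ (Ioo c (a + 2 * l)) ∨ StrictAntiOn ψ (Ioo c (a + 2 * l)))

/-- `f` possesses the μ-property with respect to `ψ`: for every shift `α` and every interval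
of monotonicity of `ψ`, the difference `ψ(t) − f(t+α)` does not change sign or changes sign
exactly once, from `−` to `+` if `ψ` increases and from `+` to `−` if `ψ` decreases. -/
def MuProperty (f ψ : ℝ → ℝ) : Prop :=
  ∀ α p q : ℝ, p < q →
    (StrictMonoOn ψ (Icc p q) →
      ∀ t₁ ∈ Icc p q, ∀ t₂ ∈ Icc p q, t₁ < t₂ →
        0 < ψ t₁ - f (t₁ + α) → ¬ (ψ t₂ - f (t₂ + α) < 0)) ∧
    (StrictAntiOn ψ (Icc p q) →
      ∀ t₁ ∈ Icc p q, ∀ t₂ ∈ Icc p q, t₁ < t₂ →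
        ψ t₁ - f (t₁ + α) < 0 → ¬ (0 < ψ t₂ - f (t₂ + α)))

/-- The step function `h_ξ` associated to knots `ξ = (ξ_1, …, ξ_{2m})`,
equal to `(−1)^j` on `[ξ_{j−1}, ξ_j)` and extended `2π`-periodically. -/
def hxi (ξ : List ℝ) : ℝ → ℝ := fun x =>
  (-1 : ℝ) ^ ((ξ.countP fun z => decide (z ≤ x - 2 * π * ⌊x / (2 * π)⌋)) + 1)

/-- `Λ̄_{2n}`: knot vectors `0 ≤ ξ_1 < ⋯ < ξ_{2m} < 2π` with `m ≤ n`. -/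
def LambdaBar (n : ℕ) : Set (List ℝ) :=
  {ξ | ∃ m : ℕ, 0 < m ∧ m ≤ n ∧ ξ.length = 2 * m ∧ ξ.Chain' (· < ·) ∧
    ∀ x ∈ ξ, x ∈ Ico (0:ℝ) (2 * π)}

/-- `Λ̄_{2n}^{φ,Θ}`: when `Θ = ℝ` (`thetaR = true`) the orthogonality
`∫_0^{2π} φ((K_β∗h_ξ)(t)) dt = 0` is imposed. -/
def LambdaBarPhi (n : ℕ) (β : ℝ) (φ : ℝ → ℝ) (thetaR : Bool) : Set (List ℝ) :=
  {ξ ∈ LambdaBar n |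
    thetaR = true → (∫ t in (0:ℝ)..(2 * π), phiK β φ (hxi ξ) t) = 0}

/-- The class of perfect splines `K̃^G_β(Λ̄_{2n}^{φ,Θ})`. -/
def SplineClass (G φ : ℝ → ℝ) (β : ℝ) (n : ℕ) (thetaR : Bool) : Set (ℝ → ℝ) :=
  {f | ∃ (a : ℝ) (ξ : List ℝ), (thetaR = false → a = 0) ∧
    ξ ∈ LambdaBarPhi n β φ thetaR ∧
    f = fun x => a + conv G (phiK β φ (hxi ξ)) x}

/-- The Bernoulli-type kernel `D_r(t) = 2 ∑_{k≥1} cos(kt − πr/2)/k^r`. -/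
def Dker (r : ℕ) : ℝ → ℝ :=
  fun t => 2 * ∑' k : ℕ, Real.cos (((k : ℝ) + 1) * t - π * r / 2) / ((k : ℝ) + 1) ^ r

/-- `φ_0(z) = tan(πz/4)`. -/
def phi0 : ℝ → ℝ := fun z => Real.tan (π * z / 4)

/-- `φ_1(z) = z`. -/
def phi1 : ℝ → ℝ := fun z => z

end

/-- antiperiodicity of convolution -/
lemma conv_anti {k u : ℝ → ℝ} (hk : Function.Periodic k (2*π))
    (hup : Function.Periodic u (2*π)) {c : ℝ} (hua : ∀ x, u (x + c) = - u x) (x : ℝ) :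
    conv k u (x + c) = - conv k u x := by
  have hg : Function.Periodic (fun s => k (x - s) * u (s + c)) (2*π) := by
    intro s
    simp only
    rw [show x - (s + 2*π) = (x - s) - 2*π by ring, show s + 2*π + c = (s + c) + 2*π by ring,
      hup (s + c), hk.sub_eq (x - s)]
  have key : (∫ t in (0:ℝ)..(2*π), k (x + c - t) * u t)
      = ∫ t in (0:ℝ)..(2*π), (fun s => k (x - s) * u (s + c)) (t - c) := by
    apply intervalIntegral.integral_congr
    intro t _
    simp only
    rw [show x - (t - c) = x + c - t by ring, show t - c + c = t by ring]
  have key2 : (∫ t in (0:ℝ)..(2*π), (fun s => k (x - s) * u (s + c)) (t - c))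
      = ∫ s in (-c)..(-c + 2*π), k (x - s) * u (s + c) := by
    rw [intervalIntegral.integral_comp_sub_right (fun s => k (x - s) * u (s + c)) c]
    congr 1 <;> ring
  have key3 : (∫ s in (-c)..(-c + 2*π), k (x - s) * u (s + c))
      = ∫ s in (0:ℝ)..(0 + 2*π), k (x - s) * u (s + c) :=
    hg.intervalIntegral_add_eq (-c) 0
  have key4 : (∫ s in (0:ℝ)..(0 + 2*π), k (x - s) * u (s + c))
      = - ∫ s in (0:ℝ)..(2*π), k (x - s) * u s := by
    rw [zero_add, ← intervalIntegral.integral_neg]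
    apply intervalIntegral.integral_congr
    intro s _
    show k (x - s) * u (s + c) = -(k (x - s) * u s)
    rw [hua s]; ring
  show (1 / (2 * π)) * _ = -((1 / (2 * π)) * _)
  rw [key, key2, key3, key4]; ring

/-- periodicity of convolution -/
lemma conv_per {k : ℝ → ℝ} (u : ℝ → ℝ) (hk : Function.Periodic k (2*π)) :
    Function.Periodic (conv k u) (2*π) := by
  intro x
  show (1 / (2 * π)) * _ = (1 / (2 * π)) * _
  congr 1
  apply intervalIntegral.integral_congr
  intro t _
  show k (x + 2*π - t) * u t = k (x - t) * u t
  rw [show x + 2*π - t = (x - t) + 2*π by ring, hk]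

/-- boundedness of continuous periodic functions -/
lemma bdd_per {f : ℝ → ℝ} (hf : Continuous f) (hp : Function.Periodic f (2*π)) :
    ∃ M, 0 ≤ M ∧ ∀ x, |f x| ≤ M := by
  obtain ⟨x₀, -, hx₀⟩ := isCompact_Icc.exists_isMaxOn (α := ℝ)
    (nonempty_Icc.2 (by positivity : (0:ℝ) ≤ 2*π)) (hf.abs.continuousOn)
  refine ⟨|f x₀|, abs_nonneg _, fun x => ?_⟩
  obtain ⟨y, hy, hxy⟩ := hp.exists_mem_Ico₀ (by positivity) x
  rw [hxy]
  exact hx₀ ⟨hy.1, hy.2.le⟩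

/-- continuity of convolution -/
lemma conv_cont {k u : ℝ → ℝ} (hk : Continuous k) {M : ℝ} (hkb : ∀ x, |k x| ≤ M)
    (hu : Measurable u) {C : ℝ} (huB : ∀ x, |u x| ≤ C) : Continuous (conv k u) := by
  have : Continuous fun x => ∫ t in (0:ℝ)..(2*π), k (x - t) * u t := by
    rw [continuous_iff_continuousAt]
    intro x₀
    apply intervalIntegral.continuousAt_of_dominated_interval (bound := fun _ => M * C)
    · filter_upwards with x
      exact ((hk.comp (continuous_const.sub continuous_id)).measurable.mul
        hu).aestronglyMeasurable
    · filter_upwards with x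
      filter_upwards with t _
      rw [Real.norm_eq_abs, abs_mul]
      exact mul_le_mul (hkb _) (huB _) (abs_nonneg _) ((abs_nonneg (k 0)).trans (hkb 0))
    · exact intervalIntegrable_const
    · filter_upwards with t _
      exact (((hk.comp (continuous_id.sub continuous_const)).mul
        continuous_const).continuousAt)
  exact continuous_const.mul this

lemma Kker_cont {β : ℝ} (hβ : 0 < β) : Continuous (Kker β) := by
  unfold Kker
  refine continuous_const.add (continuous_const.mul ?_)
  apply continuous_tsum (u := fun k : ℕ => 2 * Real.exp (-β) ^ (k + 1))
  · intro k
    exact (Real.continuous_cos.comp (continuous_const.mul continuous_id)).div_const _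
  · have h1 : Real.exp (-β) < 1 := Real.exp_lt_one_iff.mpr (by linarith)
    have := (summable_geometric_of_lt_one (Real.exp_nonneg _) h1).mul_left (2 * Real.exp (-β))
    apply this.congr
    intro k
    ring
  · intro k z
    have hc : (0:ℝ) < Real.cosh (((k : ℝ) + 1) * β) := Real.cosh_pos _
    have he : (0:ℝ) < Real.exp (((k : ℝ) + 1) * β) / 2 := by positivity
    rw [Real.norm_eq_abs, abs_div, abs_of_pos hc]
    have h2 : |Real.cos (((k : ℝ) + 1) * z)| ≤ 1 := Real.abs_cos_le_one _
    have h3 : Real.exp (((k : ℝ) + 1) * β) / 2 ≤ Real.cosh (((k : ℝ) + 1) * β) := by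
      rw [Real.cosh_eq]
      have := Real.exp_nonneg (-(((k : ℝ) + 1) * β))
      linarith
    have h5 : Real.exp (-(((k : ℝ) + 1) * β)) = Real.exp (-β) ^ (k + 1) := by
      rw [← Real.exp_nat_mul]
      congr 1
      push_cast
      ring
    calc |Real.cos (((k : ℝ) + 1) * z)| / Real.cosh (((k : ℝ) + 1) * β)
        ≤ 1 / Real.cosh (((k : ℝ) + 1) * β) := by
          gcongr
      _ ≤ 1 / (Real.exp (((k : ℝ) + 1) * β) / 2) := one_div_le_one_div_of_le he h3
      _ = 2 * Real.exp (-(((k : ℝ) + 1) * β)) := by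
          rw [Real.exp_neg]
          field_simp
      _ = 2 * Real.exp (-β) ^ (k + 1) := by rw [h5]

lemma Kker_per (β : ℝ) : Function.Periodic (Kker β) (2*π) := by
  intro z
  unfold Kker
  congr 2
  apply tsum_congr
  intro k
  congr 1
  rw [show ((k:ℝ)+1) * (z + 2*π) = ((k:ℝ)+1)*z + ((k:ℕ)+1 : ℤ) * (2*π) by push_cast; ring]
  exact Real.cos_add_int_mul_two_pi _ _

lemma hstep_meas (n : ℕ) : Measurable (hstep n) := by
  unfold hstep
  exact measurable_from_top.comp
    (((continuous_id.mul continuous_const).div_const _).measurable.floor.add_const 1)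

lemma hstep_abs (n : ℕ) (x : ℝ) : |hstep n x| = 1 := by
  unfold hstep
  rcases Int.even_or_odd (⌊x * n / π⌋ + 1) with h | h
  · rw [h.neg_one_zpow]; exact abs_one
  · rw [h.neg_one_zpow]; exact abs_neg 1 |>.trans abs_one

lemma hstep_anti {n : ℕ} (hn : 0 < n) (x : ℝ) : hstep n (x + π / n) = - hstep n x := by
  unfold hstep
  have hπ : (π:ℝ) ≠ 0 := Real.pi_ne_zero
  have hn' : (n:ℝ) ≠ 0 := Nat.cast_ne_zero.mpr hn.ne'
  rw [show (x + π / n) * n / π = x * n / π + 1 by field_simp]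
  rw [show (x * n / π + 1 : ℝ) = x * n / π + ((1:ℤ):ℝ) by norm_num, Int.floor_add_intCast]
  rw [show ⌊x * n / π⌋ + 1 + 1 = (⌊x * n / π⌋ + 1) + 1 by ring, zpow_add₀ (by norm_num : (-1:ℝ) ≠ 0)]
  simp

lemma hstep_per {n : ℕ} (hn : 0 < n) : Function.Periodic (hstep n) (2*π) := by
  intro x
  unfold hstep
  have hπ : (π:ℝ) ≠ 0 := Real.pi_ne_zero
  rw [show (x + 2*π) * n / π = x * n / π + ((2*n : ℤ) : ℝ) by push_cast; field_simp,
    Int.floor_add_intCast]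
  rw [show ⌊x * n / π⌋ + 2*(n:ℤ) + 1 = (⌊x * n / π⌋ + 1) + 2*(n:ℤ) by ring,
    zpow_add₀ (by norm_num : (-1:ℝ) ≠ 0), zpow_mul]
  norm_num

lemma abs_neg_one_zpow' (m : ℤ) : |(-1:ℝ) ^ m| = 1 := by
  rcases Int.even_or_odd m with h | h
  · rw [h.neg_one_zpow]; exact abs_one
  · rw [h.neg_one_zpow]; exact (abs_neg 1).trans abs_one

/-- **Antiperiodicity and equioscillation of the standard function**:
`Φ_{n,β}^{G,φ}` is continuous, `π/n`-antiperiodic, and attains the values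
`ε(−1)^j‖Φ‖_∞` at at least `2n` points of a period. -/
theorem standard_function_oscillation
    (β : ℝ) (hβ : 0 ≤ β) (G : ℝ → ℝ) (hGc : Continuous G)
    (hGp : Function.Periodic G (2 * π)) (φ : ℝ → ℝ) (hφ : IsAdmissiblePhi φ)
    (n : ℕ) (hn : 0 < n) :
    Continuous (stdPhi G φ β n) ∧
    (∀ x : ℝ, stdPhi G φ β n (x + π / n) = -stdPhi G φ β n x) ∧
    ∃ ε : ℝ, (ε = 1 ∨ ε = -1) ∧
      ∃ t : Fin (2 * n) → ℝ, StrictMono t ∧ (∀ j, t j ∈ Ico (0:ℝ) (2 * π)) ∧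
        ∀ j : Fin (2 * n),
          stdPhi G φ β n (t j) =
            ε * (-1) ^ ((j : ℕ) + 1) * supNorm (stdPhi G φ β n) := by
  have hπ : (0:ℝ) < π := Real.pi_pos
  set c : ℝ := π / n with hc_def
  have hc : 0 < c := by positivity
  have hcne : c ≠ 0 := hc.ne'
  set v := phiK β φ (hstep n) with hv
  have hvfacts : Measurable v ∧ (∃ C, ∀ x, |v x| ≤ C) ∧ Function.Periodic v (2*π)
      ∧ (∀ x, v (x + c) = - v x) := by
    by_cases hb0 : β = 0
    · rw [hv]; unfold phiK; rw [if_pos hb0]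
      exact ⟨hstep_meas n, ⟨1, fun x => (hstep_abs n x).le⟩, hstep_per hn, hstep_anti hn⟩
    · have hβpos : 0 < β := lt_of_le_of_ne hβ (Ne.symm hb0)
      have hKc := Kker_cont hβpos
      have hKp := Kker_per β
      obtain ⟨MK, -, hMK⟩ := bdd_per hKc hKp
      have hwc : Continuous (conv (Kker β) (hstep n)) :=
        conv_cont hKc hMK (hstep_meas n) (fun x => (hstep_abs n x).le)
      have hwp : Function.Periodic (conv (Kker β) (hstep n)) (2*π) := conv_per _ hKp
      have hwa : ∀ x, conv (Kker β) (hstep n) (x + c) = - conv (Kker β) (hstep n) x :=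
        conv_anti hKp (hstep_per hn) (hstep_anti hn)
      have hvc : Continuous v := by
        rw [hv]; unfold phiK; rw [if_neg hb0]
        exact hφ.differentiable.continuous.comp hwc
      have hvp : Function.Periodic v (2*π) := by
        intro x; rw [hv]; unfold phiK; rw [if_neg hb0]
        show φ (conv (Kker β) (hstep n) (x + 2*π)) = φ (conv (Kker β) (hstep n) x)
        rw [hwp x]
      obtain ⟨C, -, hC⟩ := bdd_per hvc hvp
      refine ⟨hvc.measurable, ⟨C, hC⟩, hvp, fun x => ?_⟩
      rw [hv]; unfold phiK; rw [if_neg hb0]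
      show φ (conv (Kker β) (hstep n) (x + c)) = - φ (conv (Kker β) (hstep n) x)
      rw [hwa x, hφ.odd]
  obtain ⟨hvm, ⟨C, hvC⟩, hvp, hva⟩ := hvfacts
  have hΦeq : stdPhi G φ β n = conv G v := rfl
  obtain ⟨MG, -, hMG⟩ := bdd_per hGc hGp
  have hcont : Continuous (stdPhi G φ β n) := by
    rw [hΦeq]; exact conv_cont hGc hMG hvm hvC
  have hanti : ∀ x, stdPhi G φ β n (x + c) = - stdPhi G φ β n x := by
    intro x; rw [hΦeq]; exact conv_anti hGp hvp hva x
  refine ⟨hcont, hanti, ?_⟩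
  set Φ := stdPhi G φ β n with hΦdef
  have hper : Function.Periodic Φ (2*π) := by rw [hΦeq]; exact conv_per _ hGp
  have hnat : ∀ (j : ℕ) (x : ℝ), Φ (x + j * c) = (-1)^j * Φ x := by
    intro j
    induction j with
    | zero => intro x; simp
    | succ m ih =>
      intro x
      rw [show x + ((m:ℕ)+1 : ℕ) * c = (x + m * c) + c by push_cast; ring, hanti, ih]
      push_cast
      ring
  have hint : ∀ (m : ℤ) (x : ℝ), Φ (x + m * c) = (-1:ℝ)^m * Φ x := by
    intro m
    induction m using Int.induction_on with
    | zero => intro x; simp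
    | succ i ih =>
      intro x
      rw [show x + (((i:ℤ))+1 : ℤ) * c = (x + (i:ℤ) * c) + c by push_cast; ring, hanti, ih]
      rw [zpow_add₀ (by norm_num : (-1:ℝ) ≠ 0)]
      ring
    | pred i ih =>
      intro x
      have h1 : Φ (x + (-(i:ℤ) - 1) * c + c) = - Φ (x + (-(i:ℤ) - 1) * c) := hanti _
      rw [show x + (-(i:ℤ) - 1) * c + c = x + ((-(i:ℤ) : ℤ) : ℝ) * c by push_cast; ring,
        ih x] at h1
      have h2 : Φ (x + ((-(i:ℤ) - 1 : ℤ) : ℝ) * c) = - ((-1:ℝ)^(-(i:ℤ)) * Φ x) := by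
        rw [show ((-(i:ℤ) - 1 : ℤ) : ℝ) = (-(i:ℤ) - 1 : ℝ) by push_cast; ring]
        linarith
      rw [h2, zpow_sub₀ (by norm_num : (-1:ℝ) ≠ 0), zpow_one, div_neg, div_one]
      ring
  obtain ⟨x₀, -, hx₀⟩ := isCompact_Icc.exists_isMaxOn (α := ℝ) (s := Icc (0:ℝ) (2*π))
    (nonempty_Icc.2 (by positivity : (0:ℝ) ≤ 2*π)) (hcont.abs.continuousOn)
  set M := |Φ x₀| with hM
  have hub : ∀ x, |Φ x| ≤ M := fun x => by
    obtain ⟨y, hy, hxy⟩ := hper.exists_mem_Ico₀ (by positivity) x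
    rw [hxy]; exact hx₀ ⟨hy.1, hy.2.le⟩
  have hsup : supNorm Φ = M := by
    unfold supNorm
    apply le_antisymm (ciSup_le hub)
    exact le_ciSup ⟨M, by rintro z ⟨x, rfl⟩; exact hub x⟩ x₀
  set y₀ := c * Int.fract (x₀ / c) with hy₀
  have hy₀0 : 0 ≤ y₀ := mul_nonneg hc.le (Int.fract_nonneg _)
  have hy₀c : y₀ < c := by
    calc y₀ < c * 1 := by
          exact mul_lt_mul_of_pos_left (Int.fract_lt_one _) hc
      _ = c := mul_one c
  have hx₀eq : x₀ = y₀ + (⌊x₀ / c⌋ : ℝ) * c := by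
    rw [hy₀, Int.fract]
    field_simp
    ring
  have hMy : Φ x₀ = (-1:ℝ)^⌊x₀/c⌋ * Φ y₀ := by
    conv_lhs => rw [hx₀eq]
    exact hint _ _
  have hMabs : |Φ y₀| = M := by
    rw [hM, hMy, abs_mul, abs_neg_one_zpow', one_mul]
  have hM0 : 0 ≤ M := abs_nonneg _
  obtain ⟨ε, hε, hεY⟩ : ∃ ε : ℝ, (ε = 1 ∨ ε = -1) ∧ Φ y₀ = -ε * M := by
    rcases (abs_eq hM0).mp hMabs with hY | hY
    · exact ⟨-1, Or.inr rfl, by rw [hY]; ring⟩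
    · exact ⟨1, Or.inl rfl, by rw [hY]; ring⟩
  refine ⟨ε, hε, fun j : Fin (2*n) => y₀ + ((j : ℕ) : ℝ) * c, ?_, ?_, ?_⟩
  · intro j j' hjj'
    have hjr : ((j : ℕ) : ℝ) < ((j' : ℕ) : ℝ) := by exact_mod_cast hjj'
    exact add_lt_add_right (mul_lt_mul_of_pos_right hjr hc) _
  · intro j
    simp only [Set.mem_Ico]
    constructor
    · have : (0:ℝ) ≤ ((j : ℕ) : ℝ) * c := mul_nonneg (Nat.cast_nonneg _) hc.le
      linarith
    · have hj : ((j : ℕ) : ℝ) ≤ 2*(n:ℝ) - 1 := by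
        have := j.isLt
        have h1 : (j : ℕ) + 1 ≤ 2*n := this
        have h2 : ((j:ℕ) : ℝ) + 1 ≤ 2*(n:ℝ) := by exact_mod_cast h1
        linarith
      have h2 : (2*(n:ℝ)) * c = 2*π := by
        rw [hc_def]
        field_simp
      have h3 : ((j : ℕ) : ℝ) * c ≤ (2*(n:ℝ) - 1) * c :=
        mul_le_mul_of_nonneg_right hj hc.le
      calc y₀ + ((j : ℕ) : ℝ) * c < c + (2*(n:ℝ) - 1) * c := by linarith
        _ = (2*(n:ℝ)) * c := by ring
        _ = 2*π := h2
  · intro j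
    show Φ (y₀ + ((j : ℕ) : ℝ) * c) = ε * (-1) ^ ((j : ℕ) + 1) * supNorm Φ
    rw [hsup, hnat ((j : ℕ)) y₀, hεY]
    ring
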